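/- Explicit form of the FF^PD_g Finslerian metric tensor: for every y ∈ ℝ^N with q(y) > 0, the function y ↦ K(y)²/2 is twice differentiable at y and its second derivative, as a symmetric bilinear form, is given for tangent vectors w₁, w₂ by G_y(w₁,w₂) = (K(y)²/B(y))·[ ⟨w₁,w₂⟩ + (g/B(y))·( q(y)·(b(y)+g·q(y))·⟨b,w₁⟩⟨b,w₂⟩ + q(y)·(⟨b,w₁⟩⟨v(y),w₂⟩ + ⟨b,w₂⟩⟨v(y),w₁⟩) − (b(y)/q(y))·⟨v(y),w₁⟩⟨v(y),w₂⟩ ) ]. -/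

import Mathlib

noncomputable section

open Real
open scoped RealInnerProductSpace

/-- The parameter `h = sqrt(1 - g^2/4)`. -/
def hpar (g : ℝ) : ℝ := Real.sqrt (1 - g ^ 2 / 4)

variable {N : ℕ}

/-- `v(y) = y - ⟨b,y⟩ b`, the part of `y` orthogonal to the unit axis vector `b`. -/
def vv (b y : EuclideanSpace ℝ (Fin N)) : EuclideanSpace ℝ (Fin N) := y - (inner ℝ b y : ℝ) • b

/-- `q(y) = ‖v(y)‖`. -/
def qq (b y : EuclideanSpace ℝ (Fin N)) : ℝ := ‖vv b y‖

/-- `A(y) = ⟨b,y⟩ + (g/2) q(y)`. -/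
def AA (g : ℝ) (b y : EuclideanSpace ℝ (Fin N)) : ℝ := (inner ℝ b y : ℝ) + g / 2 * qq b y

/-- `B(y) = ⟨b,y⟩² + g ⟨b,y⟩ q(y) + q(y)²`. -/
def BB (g : ℝ) (b y : EuclideanSpace ℝ (Fin N)) : ℝ :=
  (inner ℝ b y : ℝ) ^ 2 + g * (inner ℝ b y : ℝ) * qq b y + qq b y ^ 2

/-- The azimuthal angle `χ(y) = (1/h) arccos (A(y)/√B(y))`. -/
def chi (g : ℝ) (b y : EuclideanSpace ℝ (Fin N)) : ℝ :=
  1 / hpar g * Real.arccos (AA g b y / Real.sqrt (BB g b y))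

/-- `J(y) = exp(-(g/2) χ(y))`. -/
def JJ (g : ℝ) (b y : EuclideanSpace ℝ (Fin N)) : ℝ := Real.exp (-(g / 2) * chi g b y)

/-- The Finsleroid metric function `K(y) = √B(y) · J(y)`. -/
def KK (g : ℝ) (b y : EuclideanSpace ℝ (Fin N)) : ℝ := Real.sqrt (BB g b y) * JJ g b y

/-- The Ka-transformation `ζ(y) = (K(y)^h/√B(y)) (h v(y) + A(y) b)`. -/
def zeta (g : ℝ) (b y : EuclideanSpace ℝ (Fin N)) : EuclideanSpace ℝ (Fin N) :=
  (KK g b y ^ hpar g / Real.sqrt (BB g b y)) • (hpar g • vv b y + AA g b y • b)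

def Phi : EuclideanSpace ℝ (Fin N) →L[ℝ] EuclideanSpace ℝ (Fin N) →L[ℝ] ℝ :=
  (isBoundedBilinearMap_inner (𝕜 := ℝ)).toContinuousLinearMap

@[simp] lemma Phi_apply (x w : EuclideanSpace ℝ (Fin N)) : Phi x w = (inner ℝ x w : ℝ) := rfl

lemma hpar_sq {g : ℝ} (hg1 : -2 < g) (hg2 : g < 2) : hpar g ^ 2 = 1 - g ^ 2 / 4 :=
  Real.sq_sqrt (by nlinarith)

lemma hpar_pos {g : ℝ} (hg1 : -2 < g) (hg2 : g < 2) : 0 < hpar g :=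
  Real.sqrt_pos.mpr (by nlinarith)

lemma BB_pos {g : ℝ} (hg1 : -2 < g) (hg2 : g < 2) (b y : EuclideanSpace ℝ (Fin N))
    (hq : 0 < qq b y) : 0 < BB g b y := by
  have hg4 : 0 < 1 - g ^ 2 / 4 := by nlinarith [mul_pos (by linarith : (0:ℝ) < 2 - g) (by linarith : (0:ℝ) < 2 + g)]
  have h1 : 0 < (1 - g ^ 2 / 4) * qq b y ^ 2 := by positivity
  have h2 : BB g b y = ((inner ℝ b y : ℝ) + g * qq b y / 2) ^ 2 + (1 - g ^ 2 / 4) * qq b y ^ 2 := by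
    unfold BB; ring
  nlinarith [sq_nonneg ((inner ℝ b y : ℝ) + g * qq b y / 2)]

lemma B_sub_A_sq {g : ℝ} (b y : EuclideanSpace ℝ (Fin N)) :
    BB g b y - AA g b y ^ 2 = (1 - g ^ 2 / 4) * qq b y ^ 2 := by
  unfold BB AA; ring

lemma sqrt_one_sub_sq {g : ℝ} (hg1 : -2 < g) (hg2 : g < 2) (b y : EuclideanSpace ℝ (Fin N))
    (hq : 0 < qq b y) :
    Real.sqrt (1 - (AA g b y * (Real.sqrt (BB g b y))⁻¹) ^ 2)
      = hpar g * qq b y * (Real.sqrt (BB g b y))⁻¹ := by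
  have hB := BB_pos hg1 hg2 b y hq
  have hs : Real.sqrt (BB g b y) ^ 2 = BB g b y := Real.sq_sqrt hB.le
  have hs0 : 0 < Real.sqrt (BB g b y) := Real.sqrt_pos.mpr hB
  have hh := hpar_pos hg1 hg2
  have key : 1 - (AA g b y * (Real.sqrt (BB g b y))⁻¹) ^ 2
      = (hpar g * qq b y * (Real.sqrt (BB g b y))⁻¹) ^ 2 := by
    have hBA := B_sub_A_sq (g := g) b y
    have hp2 := hpar_sq hg1 hg2
    field_simp
    nlinarith [hs, hBA, hp2]
  rw [key, Real.sqrt_sq (by positivity)]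

lemma u_sq_lt_one {g : ℝ} (hg1 : -2 < g) (hg2 : g < 2) (b y : EuclideanSpace ℝ (Fin N))
    (hq : 0 < qq b y) : (AA g b y * (Real.sqrt (BB g b y))⁻¹) ^ 2 < 1 := by
  have hB := BB_pos hg1 hg2 b y hq
  have hs : Real.sqrt (BB g b y) ^ 2 = BB g b y := Real.sq_sqrt hB.le
  have hs0 : 0 < Real.sqrt (BB g b y) := Real.sqrt_pos.mpr hB
  have hBA := B_sub_A_sq (g := g) b y
  have hg4 : 0 < 1 - g ^ 2 / 4 := by nlinarith [mul_pos (by linarith : (0:ℝ) < 2 - g) (by linarith : (0:ℝ) < 2 + g)]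
  have h1 : 0 < (1 - g ^ 2 / 4) * qq b y ^ 2 := by positivity
  rw [mul_pow, inv_pow, hs, ← div_eq_mul_inv, div_lt_one hB]
  nlinarith

lemma vv_eq' (b z : EuclideanSpace ℝ (Fin N)) :
    vv b z = (ContinuousLinearMap.id ℝ (EuclideanSpace ℝ (Fin N)) - (innerSL ℝ b).smulRight b) z := by
  simp [vv, ContinuousLinearMap.smulRight_apply, sub_eq_sub_iff_sub_eq_sub]

lemma inner_vv_b (b : EuclideanSpace ℝ (Fin N)) (hb : ‖b‖ = 1) (z : EuclideanSpace ℝ (Fin N)) :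
    (inner ℝ (vv b z) b : ℝ) = 0 := by
  rw [vv, inner_sub_left, real_inner_smul_left, real_inner_self_eq_norm_sq, hb,
    real_inner_comm b z]
  ring

lemma hasFDerivAt_qq (b : EuclideanSpace ℝ (Fin N)) (hb : ‖b‖ = 1) (y : EuclideanSpace ℝ (Fin N))
    (hq : 0 < qq b y) :
    HasFDerivAt (fun z => qq b z) ((qq b y)⁻¹ • Phi (vv b y)) y := by
  set Tb : EuclideanSpace ℝ (Fin N) →L[ℝ] EuclideanSpace ℝ (Fin N) :=
    ContinuousLinearMap.id ℝ (EuclideanSpace ℝ (Fin N)) - (innerSL ℝ b).smulRight b with hTb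
  have hT : (fun z : EuclideanSpace ℝ (Fin N) => vv b z) = Tb := funext (vv_eq' b)
  have hQ : HasFDerivAt (fun z => (inner ℝ (vv b z) (vv b z) : ℝ))
      ((fderivInnerCLM ℝ (vv b y, vv b y)).comp (Tb.prod Tb)) y := by
    have := HasFDerivAt.inner ℝ (f := fun z => vv b z) (g := fun z => vv b z)
      (f' := Tb) (g' := Tb) (x := y) ?hf ?hf
    · exact this
    · rw [hT]; exact Tb.hasFDerivAt
  have hQy : (inner ℝ (vv b y) (vv b y) : ℝ) = qq b y ^ 2 := by
    rw [real_inner_self_eq_norm_sq]; rfl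
  have hne : (inner ℝ (vv b y) (vv b y) : ℝ) ≠ 0 := by rw [hQy]; positivity
  have hs := (Real.hasDerivAt_sqrt hne).comp_hasFDerivAt y hQ
  have heq : ((fun x => Real.sqrt x) ∘ (fun z => (inner ℝ (vv b z) (vv b z) : ℝ))) = fun z => qq b z := by
    funext z
    simp only [Function.comp]
    rw [real_inner_self_eq_norm_sq, Real.sqrt_sq (norm_nonneg _)]; rfl
  rw [heq] at hs
  refine hs.congr_fderiv ?_
  ext w
  simp only [ContinuousLinearMap.smul_apply, Phi_apply, ContinuousLinearMap.comp_apply,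
    ContinuousLinearMap.prod_apply, fderivInnerCLM_apply]
  rw [← vv_eq']
  have h1 : (inner ℝ (vv b y) (vv b w) : ℝ) = inner ℝ (vv b y) w := by
    have hw : vv b w = w - (inner ℝ b w : ℝ) • b := rfl
    rw [hw, inner_sub_right, real_inner_smul_right, inner_vv_b b hb y, mul_zero, sub_zero]
  have h2 : (inner ℝ (vv b w) (vv b y) : ℝ) = inner ℝ (vv b y) w := by
    rw [real_inner_comm]; exact h1
  rw [hQy, Real.sqrt_sq hq.le, h1, h2]
  field_simp
  ring

lemma hasFDerivAt_BB {g : ℝ} (b : EuclideanSpace ℝ (Fin N)) (hb : ‖b‖ = 1)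
    (y : EuclideanSpace ℝ (Fin N)) (hq : 0 < qq b y) :
    HasFDerivAt (fun z => BB g b z)
      ((2 * (inner ℝ b y : ℝ) + g * qq b y) • Phi b
        + ((g * (inner ℝ b y : ℝ) + 2 * qq b y) / qq b y) • Phi (vv b y)) y := by
  have ht : HasFDerivAt (fun z : EuclideanSpace ℝ (Fin N) => (inner ℝ b z : ℝ)) (Phi b) y :=
    (Phi b).hasFDerivAt
  have hqd := hasFDerivAt_qq b hb y hq
  have h := ((ht.mul ht).add ((ht.const_mul g).mul hqd)).add (hqd.mul hqd)
  have hfun : (fun z : EuclideanSpace ℝ (Fin N) =>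
      ((inner ℝ b z : ℝ) * (inner ℝ b z : ℝ) + g * (inner ℝ b z : ℝ) * qq b z) + qq b z * qq b z)
      = fun z => BB g b z := by
    funext z; rw [BB]; ring
  change HasFDerivAt (fun z : EuclideanSpace ℝ (Fin N) =>
      ((inner ℝ b z : ℝ) * (inner ℝ b z : ℝ) + g * (inner ℝ b z : ℝ) * qq b z) + qq b z * qq b z) _ y at h
  rw [hfun] at h
  refine h.congr_fderiv ?_
  ext w
  simp only [ContinuousLinearMap.add_apply, ContinuousLinearMap.smul_apply, Phi_apply,
    smul_eq_mul]
  field_simp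
  ring

lemma hasFDerivAt_chi {g : ℝ} (hg1 : -2 < g) (hg2 : g < 2) (b : EuclideanSpace ℝ (Fin N))
    (hb : ‖b‖ = 1) (y : EuclideanSpace ℝ (Fin N)) (hq : 0 < qq b y) :
    HasFDerivAt (fun z => chi g b z)
      ((-(qq b y / BB g b y)) • Phi b
        + ((inner ℝ b y : ℝ) / (qq b y * BB g b y)) • Phi (vv b y)) y := by
  have hB := BB_pos hg1 hg2 b y hq
  have hs0 : 0 < Real.sqrt (BB g b y) := Real.sqrt_pos.mpr hB
  have hs2 : Real.sqrt (BB g b y) ^ 2 = BB g b y := Real.sq_sqrt hB.le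
  have ht : HasFDerivAt (fun z : EuclideanSpace ℝ (Fin N) => (inner ℝ b z : ℝ)) (Phi b) y :=
    (Phi b).hasFDerivAt
  have hqd := hasFDerivAt_qq b hb y hq
  have hA : HasFDerivAt (fun z => AA g b z)
      (Phi b + (g / 2) • ((qq b y)⁻¹ • Phi (vv b y))) y := by
    have := ht.add (hqd.const_mul (g / 2))
    have hfun : (fun z : EuclideanSpace ℝ (Fin N) => (inner ℝ b z : ℝ) + g / 2 * qq b z)
        = fun z => AA g b z := by funext z; rw [AA]
    rw [← hfun]; exact this
  have hBB := hasFDerivAt_BB (g := g) b hb y hq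
  have hsB : HasFDerivAt (fun z => Real.sqrt (BB g b z))
      ((1 / (2 * Real.sqrt (BB g b y))) •
        ((2 * (inner ℝ b y : ℝ) + g * qq b y) • Phi b
          + ((g * (inner ℝ b y : ℝ) + 2 * qq b y) / qq b y) • Phi (vv b y))) y :=
    (Real.hasDerivAt_sqrt hB.ne').comp_hasFDerivAt y hBB
  have hi : HasFDerivAt (fun z => (Real.sqrt (BB g b z))⁻¹)
      ((-(Real.sqrt (BB g b y) ^ 2)⁻¹) •
        ((1 / (2 * Real.sqrt (BB g b y))) •
          ((2 * (inner ℝ b y : ℝ) + g * qq b y) • Phi b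
            + ((g * (inner ℝ b y : ℝ) + 2 * qq b y) / qq b y) • Phi (vv b y)))) y :=
    (hasDerivAt_inv hs0.ne').comp_hasFDerivAt y hsB
  have hu := hA.mul hi
  have habs : |AA g b y * (Real.sqrt (BB g b y))⁻¹| < 1 :=
    (sq_lt_one_iff_abs_lt_one _).mp (u_sq_lt_one hg1 hg2 b y hq)
  have hne1 : AA g b y * (Real.sqrt (BB g b y))⁻¹ ≠ -1 := by
    intro h; rw [h] at habs; simp at habs
  have hne2 : AA g b y * (Real.sqrt (BB g b y))⁻¹ ≠ 1 := by
    intro h; rw [h] at habs; simp at habs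
  have harc := (Real.hasDerivAt_arccos hne1 hne2).comp_hasFDerivAt y hu
  have hchi := harc.const_mul (1 / hpar g)
  have hfun : (fun z => 1 / hpar g * Real.arccos (AA g b z * (Real.sqrt (BB g b z))⁻¹))
      = fun z => chi g b z := by
    funext z; simp [chi, div_eq_mul_inv]
  simp only [Function.comp] at hchi
  change HasFDerivAt (fun z => 1 / hpar g * Real.arccos (AA g b z * (Real.sqrt (BB g b z))⁻¹)) _ y at hchi
  rw [hfun] at hchi
  refine hchi.congr_fderiv ?_
  ext w
  have hrw := sqrt_one_sub_sq hg1 hg2 b y hq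
  have hh0 := hpar_pos hg1 hg2
  have hp2 := hpar_sq hg1 hg2
  simp only [ContinuousLinearMap.add_apply, ContinuousLinearMap.smul_apply, Phi_apply,
    smul_eq_mul, Function.comp, hrw]
  rw [BB, AA] at *
  set t := (inner ℝ b y : ℝ)
  set q := qq b y
  set s := Real.sqrt ((inner ℝ b y : ℝ) ^ 2 + g * (inner ℝ b y : ℝ) * qq b y + qq b y ^ 2) with hsdef
  set β := (inner ℝ b w : ℝ)
  set ν := (inner ℝ (vv b y) w : ℝ)
  rw [← hs2]
  field_simp
  ring_nf
  rw [hs2, hp2]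
  ring

lemma BB_nonneg {g : ℝ} (hg1 : -2 < g) (hg2 : g < 2) (b z : EuclideanSpace ℝ (Fin N)) :
    0 ≤ BB g b z := by
  have hg4 : 0 < 1 - g ^ 2 / 4 := by
    nlinarith [mul_pos (by linarith : (0:ℝ) < 2 - g) (by linarith : (0:ℝ) < 2 + g)]
  have h2 : BB g b z = ((inner ℝ b z : ℝ) + g * qq b z / 2) ^ 2 + (1 - g ^ 2 / 4) * qq b z ^ 2 := by
    rw [BB]; ring
  nlinarith [sq_nonneg ((inner ℝ b z : ℝ) + g * qq b z / 2), sq_nonneg (qq b z)]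

lemma KK_sq {g : ℝ} (hg1 : -2 < g) (hg2 : g < 2) (b z : EuclideanSpace ℝ (Fin N)) :
    KK g b z ^ 2 = BB g b z * Real.exp (-g * chi g b z) := by
  rw [KK, JJ, mul_pow, Real.sq_sqrt (BB_nonneg hg1 hg2 b z), pow_two, ← Real.exp_add]
  have : -(g / 2) * chi g b z + -(g / 2) * chi g b z = -g * chi g b z := by ring
  rw [this]

def DF {N : ℕ} (g : ℝ) (b y : EuclideanSpace ℝ (Fin N)) :
    EuclideanSpace ℝ (Fin N) →L[ℝ] ℝ :=
  (Real.exp (-g * chi g b y) * ((inner ℝ b y : ℝ) + g * qq b y)) • Phi b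
    + Real.exp (-g * chi g b y) • Phi (vv b y)

lemma hasFDerivAt_KK2 {g : ℝ} (hg1 : -2 < g) (hg2 : g < 2) (b : EuclideanSpace ℝ (Fin N))
    (hb : ‖b‖ = 1) (y : EuclideanSpace ℝ (Fin N)) (hq : 0 < qq b y) :
    HasFDerivAt (fun z => KK g b z ^ 2 / 2) (DF g b y) y := by
  have hB := BB_pos hg1 hg2 b y hq
  have hfun : (fun z => KK g b z ^ 2 / 2)
      = fun z => (1/2) * (BB g b z * Real.exp (-g * chi g b z)) := by
    funext z; rw [KK_sq hg1 hg2 b z]; ring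
  rw [hfun]
  have hBB := hasFDerivAt_BB (g := g) b hb y hq
  have hchi := hasFDerivAt_chi hg1 hg2 b hb y hq
  have hexp := (Real.hasDerivAt_exp (-g * chi g b y)).comp_hasFDerivAt y (hchi.const_mul (-g))
  have h := (hBB.mul hexp).const_mul (1/2)
  refine h.congr_fderiv ?_
  ext w
  simp only [DF, ContinuousLinearMap.add_apply, ContinuousLinearMap.smul_apply, Phi_apply,
    smul_eq_mul, ContinuousLinearMap.coe_smul', Pi.smul_apply, Function.comp]
  field_simp
  ring

def Dchi {N : ℕ} (g : ℝ) (b y : EuclideanSpace ℝ (Fin N)) :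
    EuclideanSpace ℝ (Fin N) →L[ℝ] ℝ :=
  (-(qq b y / BB g b y)) • Phi b + ((inner ℝ b y : ℝ) / (qq b y * BB g b y)) • Phi (vv b y)

def D2 {N : ℕ} (g : ℝ) (b y : EuclideanSpace ℝ (Fin N)) :
    EuclideanSpace ℝ (Fin N) →L[ℝ] EuclideanSpace ℝ (Fin N) →L[ℝ] ℝ :=
  (Real.exp (-g * chi g b y) • (Phi b + g • ((qq b y)⁻¹ • Phi (vv b y)))
      + ((inner ℝ b y : ℝ) + g * qq b y) •
          (Real.exp (-g * chi g b y) • ((-g) • Dchi g b y))).smulRight (Phi b)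
    + (Real.exp (-g * chi g b y) •
        (Phi.comp (ContinuousLinearMap.id ℝ (EuclideanSpace ℝ (Fin N))
          - (innerSL ℝ b).smulRight b))
      + (Real.exp (-g * chi g b y) • ((-g) • Dchi g b y)).smulRight (Phi (vv b y)))

lemma hasFDerivAt_DF {g : ℝ} (hg1 : -2 < g) (hg2 : g < 2) (b : EuclideanSpace ℝ (Fin N))
    (hb : ‖b‖ = 1) (y : EuclideanSpace ℝ (Fin N)) (hq : 0 < qq b y) :
    HasFDerivAt (fun z => DF g b z) (D2 g b y) y := by
  have ht : HasFDerivAt (fun z : EuclideanSpace ℝ (Fin N) => (inner ℝ b z : ℝ)) (Phi b) y :=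
    (Phi b).hasFDerivAt
  have hqd := hasFDerivAt_qq b hb y hq
  have hchi := hasFDerivAt_chi hg1 hg2 b hb y hq
  have he := (Real.hasDerivAt_exp (-g * chi g b y)).comp_hasFDerivAt y (hchi.const_mul (-g))
  have hm : HasFDerivAt (fun z : EuclideanSpace ℝ (Fin N) => (inner ℝ b z : ℝ) + g * qq b z)
      (Phi b + g • ((qq b y)⁻¹ • Phi (vv b y))) y := ht.add (hqd.const_mul g)
  have hc := he.mul hm
  have hterm1 := hc.smul_const (Phi b)
  have hPhiV : HasFDerivAt (fun z => Phi (vv b z))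
      (Phi.comp (ContinuousLinearMap.id ℝ (EuclideanSpace ℝ (Fin N))
        - (innerSL ℝ b).smulRight b)) y := by
    have hfn : (fun z => Phi (vv b z)) = fun z => (Phi.comp (ContinuousLinearMap.id ℝ
        (EuclideanSpace ℝ (Fin N)) - (innerSL ℝ b).smulRight b)) z := by
      funext z; rw [ContinuousLinearMap.comp_apply, ← vv_eq']
    rw [hfn]
    exact (Phi.comp _).hasFDerivAt
  have hterm2 := he.smul hPhiV
  have h := hterm1.add hterm2
  exact h

set_option maxHeartbeats 1000000 in
theorem stmt11 (N : ℕ) (hN : 2 ≤ N) (g : ℝ) (hg1 : -2 < g) (hg2 : g < 2)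
    (b : EuclideanSpace ℝ (Fin N)) (hb : ‖b‖ = 1)
    (y : EuclideanSpace ℝ (Fin N)) (hq : 0 < qq b y) :
    DifferentiableAt ℝ (fun z => KK g b z ^ 2 / 2) y ∧
    DifferentiableAt ℝ (fderiv ℝ (fun z => KK g b z ^ 2 / 2)) y ∧
    ∀ w₁ w₂ : EuclideanSpace ℝ (Fin N),
      fderiv ℝ (fderiv ℝ (fun z => KK g b z ^ 2 / 2)) y w₁ w₂ =
        KK g b y ^ 2 / BB g b y *
          ((inner ℝ w₁ w₂ : ℝ) + g / BB g b y *
            (qq b y * ((inner ℝ b y : ℝ) + g * qq b y) * (inner ℝ b w₁ : ℝ) * (inner ℝ b w₂ : ℝ)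
              + qq b y * ((inner ℝ b w₁ : ℝ) * (inner ℝ (vv b y) w₂ : ℝ) + (inner ℝ b w₂ : ℝ) * (inner ℝ (vv b y) w₁ : ℝ))
              - (inner ℝ b y : ℝ) / qq b y * (inner ℝ (vv b y) w₁ : ℝ) * (inner ℝ (vv b y) w₂ : ℝ))) := by
  have hF := hasFDerivAt_KK2 hg1 hg2 b hb y hq
  have hD2 := hasFDerivAt_DF hg1 hg2 b hb y hq
  have hB := BB_pos hg1 hg2 b y hq
  have hopen : IsOpen {z : EuclideanSpace ℝ (Fin N) | 0 < qq b z} := by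
    have hcont : Continuous (fun z => qq b z) := by
      have hfn : (fun z : EuclideanSpace ℝ (Fin N) => qq b z)
          = fun z => ‖(ContinuousLinearMap.id ℝ (EuclideanSpace ℝ (Fin N))
              - (innerSL ℝ b).smulRight b) z‖ := by
        funext z; rw [qq, vv_eq']
      rw [hfn]
      exact (ContinuousLinearMap.continuous _).norm
    exact isOpen_lt continuous_const hcont
  have heq : fderiv ℝ (fun z => KK g b z ^ 2 / 2) =ᶠ[nhds y] (fun z => DF g b z) := by
    filter_upwards [hopen.mem_nhds hq] with z hz
    exact (hasFDerivAt_KK2 hg1 hg2 b hb z hz).fderiv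
  refine ⟨hF.differentiableAt, ?_, ?_⟩
  · exact hD2.differentiableAt.congr_of_eventuallyEq heq
  · intro w₁ w₂
    have h3 : fderiv ℝ (fderiv ℝ (fun z => KK g b z ^ 2 / 2)) y = D2 g b y := by
      rw [heq.fderiv_eq]
      exact hD2.fderiv
    rw [h3, KK_sq hg1 hg2 b y]
    have hsub : (inner ℝ ((ContinuousLinearMap.id ℝ (EuclideanSpace ℝ (Fin N))
        - (innerSL ℝ b).smulRight b) w₁) w₂ : ℝ)
        = (inner ℝ w₁ w₂ : ℝ) - (inner ℝ b w₁ : ℝ) * (inner ℝ b w₂ : ℝ) := by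
      rw [← vv_eq', vv, inner_sub_left, real_inner_smul_left]
    simp only [D2, Dchi, ContinuousLinearMap.add_apply,
      ContinuousLinearMap.smulRight_apply, ContinuousLinearMap.smul_apply,
      ContinuousLinearMap.comp_apply, Phi_apply, smul_eq_mul,
      ContinuousLinearMap.coe_smul', Pi.smul_apply]
    rw [hsub]
    have hq0 : qq b y ≠ 0 := hq.ne'
    have hB0 : BB g b y ≠ 0 := hB.ne'
    set t := (inner ℝ b y : ℝ) with hts
    set q := qq b y with hqs
    set B := BB g b y with hBs
    set e := Real.exp (-g * chi g b y) with hes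
    have hBrel : B = t ^ 2 + g * t * q + q ^ 2 := by rw [hBs, BB]
    rw [hBrel] at hB0 ⊢
    generalize hD : t ^ 2 + g * t * q + q ^ 2 = D at hB0 ⊢
    field_simp
    subst hD
    ring
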